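/- Linear convergence under an initial spectral gap with a kernel that stays λ/2-close to its initial value: let n ≥ 1, T > 0, λ > 0, y ∈ ℝⁿ, let K : [0,T] → (n×n real symmetric matrices) be continuous with vᵀ K(0) v ≥ λ ‖v‖₂² for every v ∈ ℝⁿ, and suppose ‖K(t) − K(0)‖_{op} ≤ λ/2 for all t ∈ [0,T], where ‖·‖_{op} is the operator norm with respect to the Euclidean norm. If f : [0,T] → ℝⁿ is differentiable with f'(t) = −(1/n) K(t)(f(t) − y), then for all t ∈ [0,T], ‖f(t) − y‖₂² ≤ e^{−λ t/(2n)} ‖f(0) − y‖₂². -/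

import Mathlib

open scoped RealInnerProductSpace

/-- Linear convergence under an initial spectral gap with a kernel staying
`λ/2`-close (in operator norm) to its initial value: if `K : [0,T] →` (symmetric n×n
matrices) is continuous, `vᵀ K(0) v ≥ λ ‖v‖₂²` for all `v`, `‖K(t) - K(0)‖_op ≤ λ/2` on
`[0,T]`, and `f'(t) = -(1/n) K(t)(f(t) - y)`, then
`‖f(t) - y‖₂² ≤ exp(-λ t/(2n)) ‖f(0) - y‖₂²` on `[0,T]`. -/
theorem stmt_4 (n : ℕ) (hn : 1 ≤ n) (T lam : ℝ) (hT : 0 < T) (hlam : 0 < lam)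
    (y : EuclideanSpace ℝ (Fin n))
    (K : ℝ → Matrix (Fin n) (Fin n) ℝ)
    (hKsymm : ∀ t ∈ Set.Icc (0 : ℝ) T, (K t).IsSymm)
    (hKcont : ContinuousOn K (Set.Icc 0 T))
    (hK0pos : ∀ v : EuclideanSpace ℝ (Fin n),
      lam * ‖v‖ ^ 2 ≤ ⟪v, Matrix.toEuclideanLin (K 0) v⟫)
    (hKclose : ∀ t ∈ Set.Icc (0 : ℝ) T,
      ‖LinearMap.toContinuousLinearMap (Matrix.toEuclideanLin (K t - K 0))‖ ≤ lam / 2)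
    (f : ℝ → EuclideanSpace ℝ (Fin n))
    (hf : ∀ t ∈ Set.Icc (0 : ℝ) T,
      HasDerivWithinAt f (-(1 / n : ℝ) • Matrix.toEuclideanLin (K t) (f t - y))
        (Set.Icc 0 T) t) :
    ∀ t ∈ Set.Icc (0 : ℝ) T,
      ‖f t - y‖ ^ 2 ≤ Real.exp (-(lam * t) / (2 * n)) * ‖f 0 - y‖ ^ 2 := by
  have hnpos : (0 : ℝ) < n := by exact_mod_cast Nat.lt_of_lt_of_le Nat.zero_lt_one hn
  -- coercivity of K t for all t in [0,T]
  have key : ∀ t ∈ Set.Icc (0 : ℝ) T, ∀ v : EuclideanSpace ℝ (Fin n),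
      lam / 2 * ‖v‖ ^ 2 ≤ ⟪v, Matrix.toEuclideanLin (K t) v⟫ := by
    intro t ht v
    have h1 := hK0pos v
    have h2 : ‖(Matrix.toEuclideanLin (K t - K 0)) v‖ ≤ lam / 2 * ‖v‖ := by
      have := (LinearMap.toContinuousLinearMap (Matrix.toEuclideanLin (K t - K 0))).le_opNorm v
      rw [LinearMap.coe_toContinuousLinearMap'] at this
      exact this.trans (mul_le_mul_of_nonneg_right (hKclose t ht) (norm_nonneg v))
    have h3 : |⟪v, Matrix.toEuclideanLin (K t - K 0) v⟫| ≤ lam / 2 * ‖v‖ ^ 2 := by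
      calc |⟪v, Matrix.toEuclideanLin (K t - K 0) v⟫|
          ≤ ‖v‖ * ‖Matrix.toEuclideanLin (K t - K 0) v‖ := abs_real_inner_le_norm _ _
        _ ≤ ‖v‖ * (lam / 2 * ‖v‖) := by
            exact mul_le_mul_of_nonneg_left h2 (norm_nonneg v)
        _ = lam / 2 * ‖v‖ ^ 2 := by ring
    have heq : ⟪v, Matrix.toEuclideanLin (K t) v⟫
        = ⟪v, Matrix.toEuclideanLin (K 0) v⟫ + ⟪v, Matrix.toEuclideanLin (K t - K 0) v⟫ := by
      rw [map_sub, LinearMap.sub_apply, inner_sub_right]; ring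
    have := abs_le.1 h3
    linarith [this.1]
  set s := Set.Icc (0 : ℝ) T with hs
  -- g = squared distance
  set g : ℝ → ℝ := fun t => ‖f t - y‖ ^ 2 with hg
  have hu : ∀ t ∈ s, HasDerivWithinAt (fun t => f t - y)
      (-(1 / n : ℝ) • Matrix.toEuclideanLin (K t) (f t - y)) s t := by
    intro t ht; exact (hf t ht).sub_const y
  have hgderiv : ∀ t ∈ s, HasDerivWithinAt g
      (-(2 / n) * ⟪f t - y, Matrix.toEuclideanLin (K t) (f t - y)⟫) s t := by
    intro t ht
    have h := ((hu t ht).inner ℝ (hu t ht))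
    have hrw : (fun t => ⟪f t - y, f t - y⟫) = g := by
      funext x; rw [real_inner_self_eq_norm_sq]
    rw [hrw] at h
    refine h.congr_deriv ?_
    rw [real_inner_smul_right, real_inner_smul_left,
      real_inner_comm (Matrix.toEuclideanLin (K t) (f t - y)) (f t - y)]
    ring
  -- h = exp(lam t / (2n)) * g t
  set c : ℝ := lam / (2 * n) with hc
  have hcpos : 0 < c := by positivity
  set h : ℝ → ℝ := fun t => Real.exp (c * t) * g t with hh
  have hhderiv : ∀ t ∈ s, HasDerivWithinAt h
      (Real.exp (c * t) * (c * g t + (-(2 / n) * ⟪f t - y, Matrix.toEuclideanLin (K t) (f t - y)⟫))) s t := by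
    intro t ht
    have he : HasDerivWithinAt (fun t => Real.exp (c * t)) (c * Real.exp (c * t)) s t := by
      simpa [mul_comm] using ((hasDerivAt_id t).const_mul c).exp.hasDerivWithinAt
    have := he.mul (hgderiv t ht)
    refine this.congr_deriv ?_
    ring
  have hderiv_nonpos : ∀ t ∈ s,
      Real.exp (c * t) * (c * g t + (-(2 / n) * ⟪f t - y, Matrix.toEuclideanLin (K t) (f t - y)⟫)) ≤ 0 := by
    intro t ht
    have hk := key t ht (f t - y)
    have hgnn : 0 ≤ g t := by positivity
    have hinner : (2 / n) * (lam / 2 * g t) ≤ (2 / n) * ⟪f t - y, Matrix.toEuclideanLin (K t) (f t - y)⟫ := by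
      apply mul_le_mul_of_nonneg_left _ (by positivity)
      simpa [hg] using hk
    have hsum : c * g t + (-(2 / n) * ⟪f t - y, Matrix.toEuclideanLin (K t) (f t - y)⟫) ≤ 0 := by
      have hcg : c * g t = (lam / (2 * n)) * g t := by rw [hc]
      have h2 : (2 / n) * (lam / 2 * g t) = (lam / n) * g t := by field_simp
      have : (lam / n) * g t ≤ (2 / n) * ⟪f t - y, Matrix.toEuclideanLin (K t) (f t - y)⟫ := by
        rw [← h2]; exact hinner
      have hle : (lam / (2 * n)) * g t ≤ (lam / n) * g t := by
        apply mul_le_mul_of_nonneg_right _ hgnn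
        rw [div_le_div_iff₀ (by positivity) (by positivity)]
        nlinarith
      linarith
    exact mul_nonpos_of_nonneg_of_nonpos (Real.exp_nonneg _) hsum
  -- h is antitone on s
  have hfc : ContinuousOn f s := fun t ht => (hf t ht).continuousWithinAt
  have hgc : ContinuousOn g s := ((hfc.sub continuousOn_const).norm).pow 2
  have hcont : ContinuousOn h s :=
    ((Real.continuous_exp.comp (continuous_const.mul continuous_id)).continuousOn).mul hgc
  have hanti : AntitoneOn h s := by
    apply antitoneOn_of_deriv_nonpos (convex_Icc 0 T) hcont
    · intro t ht
      rw [interior_Icc] at ht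
      have := (hhderiv t (Set.mem_Icc_of_Ioo ht)).hasDerivAt
        (Icc_mem_nhds ht.1 ht.2)
      exact this.differentiableAt.differentiableWithinAt
    · intro t ht
      rw [interior_Icc] at ht
      have hd := (hhderiv t (Set.mem_Icc_of_Ioo ht)).hasDerivAt (Icc_mem_nhds ht.1 ht.2)
      rw [hd.deriv]
      exact hderiv_nonpos t (Set.mem_Icc_of_Ioo ht)
  intro t ht
  have h0 : (0 : ℝ) ∈ s := Set.left_mem_Icc.2 (le_of_lt hT)
  have := hanti h0 ht ht.1
  rw [hh] at this
  simp only [mul_zero, Real.exp_zero, one_mul] at this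
  have hexp : (0:ℝ) < Real.exp (c * t) := Real.exp_pos _
  have hfinal : g t ≤ Real.exp (-(c * t)) * g 0 := by
    rw [Real.exp_neg, inv_mul_eq_div, le_div_iff₀ hexp]
    linarith [this]
  have harg : -(lam * t) / (2 * n) = -(c * t) := by
    rw [hc]; field_simp
  rw [harg]
  exact hfinal
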